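/- Let x : [0,∞) → ℝ be càdlàg with x(0) ≥ 0, and define Γ₂(x)(t) = sup_{0 ≤ s ≤ t} max(−x(s), 0) and Γ₁(x)(t) = x(t) + Γ₂(x)(t). Then the pair (Γ₁(x), Γ₂(x)) solves the one-dimensional Skorokhod problem for x; that is, Γ₁(x) = x + Γ₂(x), Γ₁(x)(t) ≥ 0 for all t ≥ 0, Γ₂(x)(0) = 0, Γ₂(x) is nondecreasing, and the Lebesgue–Stieltjes measure induced by Γ₂(x) assigns zero mass to the set {t ≥ 0 : Γ₁(x)(t) > 0}. -/

import Mathlib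

open MeasureTheory Set Filter Function
open scoped Topology

/-- A function `x : ℝ → ℝ`, viewed as a path on `[0,∞)`, is càdlàg if it is
right-continuous at every `t ≥ 0` and has left limits at every `t > 0`. -/
def Cadlag (x : ℝ → ℝ) : Prop :=
  (∀ t : ℝ, 0 ≤ t → ContinuousWithinAt x (Set.Ici t) t) ∧
  (∀ t : ℝ, 0 < t → ∃ l : ℝ, Filter.Tendsto x (nhdsWithin t (Set.Iio t)) (nhds l))

/-- The second component of the one-dimensional Skorokhod map:
`Γ₂(x)(t) = sup_{0 ≤ s ≤ t} max(−x(s), 0)` (equal to `0` for `t < 0`). -/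
noncomputable def Gamma2 (x : ℝ → ℝ) (t : ℝ) : ℝ :=
  sSup ((fun s => max (-x s) 0) '' Set.Icc 0 t)

/-- The first component of the one-dimensional Skorokhod map:
`Γ₁(x)(t) = x(t) + Γ₂(x)(t)`. -/
noncomputable def Gamma1 (x : ℝ → ℝ) (t : ℝ) : ℝ := x t + Gamma2 x t

lemma gamma2_nonneg (x : ℝ → ℝ) (t : ℝ) : 0 ≤ Gamma2 x t :=
  Real.sSup_nonneg (by rintro y ⟨s, -, rfl⟩; exact le_max_right _ _)

lemma gamma2_bdd (x : ℝ → ℝ) (hx : Cadlag x) (t : ℝ) :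
    BddAbove ((fun s => max (-x s) 0) '' Set.Icc 0 t) := by
  set f : ℝ → ℝ := fun s => max (-x s) 0 with hf
  refine (isCompact_Icc (a := (0:ℝ)) (b := t)).induction_on
    (p := fun U => BddAbove (f '' U)) (by simp) ?_ ?_ ?_
  · intro U V hUV hV
    exact hV.mono (Set.image_mono hUV)
  · intro U V hU hV
    rw [Set.image_union]; exact hU.union hV
  · intro s hs
    have hs0 : (0:ℝ) ≤ s := hs.1
    -- right side
    have hr : Filter.Tendsto f (𝓝[Set.Ici s] s) (𝓝 (max (-x s) 0)) :=
      ((hx.1 s hs0).neg.max tendsto_const_nhds)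
    have hr' : ∀ᶠ u in 𝓝[Set.Ici s] s, f u ≤ max (-x s) 0 + 1 :=
      hr.eventually_le_const (lt_add_one _)
    rcases eq_or_lt_of_le hs0 with h0 | h0
    · -- s = 0
      refine ⟨{u | f u ≤ max (-x s) 0 + 1}, ?_, ?_⟩
      · exact nhdsWithin_mono _ (Set.Icc_subset_Ici_self.trans (by rw [← h0])) hr'
      · exact ⟨max (-x s) 0 + 1, by rintro y ⟨u, hu, rfl⟩; exact hu⟩
    · rcases hx.2 s h0 with ⟨l, hl⟩
      have hl2 : Filter.Tendsto f (𝓝[Set.Iio s] s) (𝓝 (max (-l) 0)) :=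
        (hl.neg.max tendsto_const_nhds)
      have hl' : ∀ᶠ u in 𝓝[Set.Iio s] s, f u ≤ max (-l) 0 + 1 :=
        hl2.eventually_le_const (lt_add_one _)
      set M := max (max (-x s) 0 + 1) (max (-l) 0 + 1) with hM
      have h1 : {u | f u ≤ M} ∈ 𝓝[Set.Ici s] s := by
        refine Filter.mem_of_superset hr' (fun u hu => ?_)
        simp only [Set.mem_setOf_eq] at hu ⊢
        exact le_trans hu (le_max_left _ _)
      have h2 : {u | f u ≤ M} ∈ 𝓝[Set.Iio s] s := by
        refine Filter.mem_of_superset hl' (fun u hu => ?_)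
        simp only [Set.mem_setOf_eq] at hu ⊢
        exact le_trans hu (le_max_right _ _)
      have h3 : {u | f u ≤ M} ∈ 𝓝 s := by
        rw [← nhdsLT_sup_nhdsGE s]
        exact Filter.mem_sup.2 ⟨h2, h1⟩
      exact ⟨{u | f u ≤ M}, nhdsWithin_le_nhds h3,
        ⟨M, by rintro y ⟨u, hu, rfl⟩; exact hu⟩⟩

lemma gamma2_le (x : ℝ → ℝ) (hx : Cadlag x) {s t : ℝ} (hs : s ∈ Set.Icc 0 t) :
    max (-x s) 0 ≤ Gamma2 x t :=
  le_csSup (gamma2_bdd x hx t) ⟨s, hs, rfl⟩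

lemma gamma2_neg (x : ℝ → ℝ) {t : ℝ} (ht : t < 0) : Gamma2 x t = 0 := by
  rw [Gamma2, Set.Icc_eq_empty (not_le.2 ht)]
  simp [Real.sSup_empty]

lemma gamma2_mono (x : ℝ → ℝ) (hx : Cadlag x) : Monotone (Gamma2 x) := by
  intro a b hab
  rcases lt_or_ge a 0 with ha | ha
  · rw [gamma2_neg x ha]; exact gamma2_nonneg x b
  · exact csSup_le_csSup (gamma2_bdd x hx b)
      ⟨_, Set.mem_image_of_mem _ (Set.left_mem_Icc.2 ha)⟩
      (Set.image_mono (Set.Icc_subset_Icc_right hab))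

lemma gamma1_nonneg (x : ℝ → ℝ) (hx : Cadlag x) {t : ℝ} (ht : 0 ≤ t) : 0 ≤ Gamma1 x t := by
  have := gamma2_le x hx (Set.right_mem_Icc.2 ht)
  have h2 : -x t ≤ Gamma2 x t := le_trans (le_max_left _ _) this
  rw [Gamma1]; linarith

lemma gamma2_zero (x : ℝ → ℝ) (hx0 : 0 ≤ x 0) : Gamma2 x 0 = 0 := by
  rw [Gamma2, Set.Icc_self, Set.image_singleton, csSup_singleton]
  simp [neg_nonpos.2 hx0]

lemma gamma2_rightCont (x : ℝ → ℝ) (hx : Cadlag x) (t : ℝ) :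
    ContinuousWithinAt (Gamma2 x) (Set.Ici t) t := by
  rcases lt_or_ge t 0 with ht | ht
  · -- locally constant 0
    have hmem : Set.Iio (0:ℝ) ∈ 𝓝[Set.Ici t] t :=
      nhdsWithin_le_nhds (Iio_mem_nhds ht)
    have : ∀ᶠ u in 𝓝[Set.Ici t] t, Gamma2 x u = Gamma2 x t := by
      filter_upwards [hmem] with u hu
      rw [gamma2_neg x hu, gamma2_neg x ht]
    exact Filter.Tendsto.congr' (Filter.EventuallyEq.symm this) tendsto_const_nhds
  · set y := Gamma2 x with hy
    rw [ContinuousWithinAt]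
    refine tendsto_order.2 ⟨?_, ?_⟩
    · intro a ha
      filter_upwards [eventually_mem_nhdsWithin] with u hu
      exact lt_of_lt_of_le ha (gamma2_mono x hx hu)
    · intro b hb
      set ε := b - y t with hε
      have hεpos : 0 < ε := sub_pos.2 hb
      -- right continuity of x at t
      have hrc : Filter.Tendsto x (𝓝[Set.Ici t] t) (𝓝 (x t)) := hx.1 t ht
      have hev : ∀ᶠ s in 𝓝[Set.Ici t] t, x t - ε/2 < x s :=
        hrc.eventually_const_lt (by linarith)
      rcases mem_nhdsGE_iff_exists_Ico_subset.1 hev with ⟨u', hu', hIco⟩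
      filter_upwards [Filter.inter_mem (Ico_mem_nhdsGE_of_mem (Set.left_mem_Ico.2 hu'))
        eventually_mem_nhdsWithin] with u hu
      obtain ⟨huIco, hut⟩ := hu
      have hyu : y u ≤ y t + ε/2 := by
        apply csSup_le ⟨_, Set.mem_image_of_mem _ (Set.left_mem_Icc.2 (le_trans ht hut))⟩
        rintro v ⟨s, hs, rfl⟩
        rcases le_or_gt s t with hst | hst
        · have : max (-x s) 0 ≤ y t := gamma2_le x hx ⟨hs.1, hst⟩
          linarith
        · have hsIco : s ∈ Set.Ico t u' := ⟨hst.le, lt_of_le_of_lt hs.2 huIco.2⟩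
          have h1 : x t - ε/2 < x s := hIco hsIco
          have h2 : max (-x t) 0 ≤ y t := gamma2_le x hx (Set.right_mem_Icc.2 ht)
          have h3 : -x s < -x t + ε/2 := by linarith
          have h4 : -x t ≤ y t := le_trans (le_max_left _ _) h2
          have h0 : (0:ℝ) ≤ y t + ε/2 := by
            have := gamma2_nonneg x t; linarith
          exact max_le (by linarith) h0
      have hb2 : y t + (b - y t)/2 < b := by linarith
      exact lt_of_le_of_lt hyu hb2

lemma gamma2_const_of_pos (x : ℝ → ℝ) (hx : Cadlag x) {t : ℝ} (ht : 0 ≤ t)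
    (hz : 0 < Gamma1 x t) :
    ∃ δ > 0, ∀ u ∈ Set.Ico t (t + δ), Gamma2 x u = Gamma2 x t := by
  set y := Gamma2 x with hy
  set ε := Gamma1 x t / 2 with hε
  have hεpos : 0 < ε := by positivity
  have hzc : Filter.Tendsto (Gamma1 x) (𝓝[Set.Ici t] t) (𝓝 (Gamma1 x t)) := by
    have := (hx.1 t ht).add (gamma2_rightCont x hx t)
    exact this
  have hev : ∀ᶠ u in 𝓝[Set.Ici t] t, ε < Gamma1 x u :=
    hzc.eventually_const_lt (by rw [hε]; linarith)
  rcases mem_nhdsGE_iff_exists_Ico_subset.1 hev with ⟨u', hu', hIco⟩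
  refine ⟨u' - t, by simpa using hu', fun u hu => ?_⟩
  have hu' : u ∈ Set.Ico t u' := by
    constructor
    · exact hu.1
    · have := hu.2; linarith
  have htu : t ≤ u := hu.1
  have key : y u ≤ max (y u - ε) (y t) := by
    apply csSup_le ⟨_, Set.mem_image_of_mem _ (Set.left_mem_Icc.2 (le_trans ht htu))⟩
    rintro v ⟨s, hs, rfl⟩
    rcases le_or_gt s t with hst | hst
    · exact le_trans (gamma2_le x hx ⟨hs.1, hst⟩) (le_max_right _ _)
    · have hsIco : s ∈ Set.Ico t u' := ⟨hst.le, lt_of_le_of_lt hs.2 hu'.2⟩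
      have h1 : ε < Gamma1 x s := hIco hsIco
      have h2 : y s ≤ y u := gamma2_mono x hx hs.2
      have h3 : -x s < y u - ε := by
        have : Gamma1 x s = x s + y s := rfl
        rw [this] at h1; linarith
      exact max_le (le_trans h3.le (le_max_left _ _)) (le_trans (gamma2_nonneg x t) (le_max_right _ _))
  have : y u ≤ y t := by
    rcases max_cases (y u - ε) (y t) with ⟨hm, -⟩ | ⟨hm, -⟩
    · rw [hm] at key; linarith
    · rw [hm] at key; exact key
  exact le_antisymm this (gamma2_mono x hx htu)

lemma gamma2_leftLim (x : ℝ → ℝ) (hx : Cadlag x) (hx0 : 0 ≤ x 0) {t : ℝ} (ht : 0 ≤ t)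
    (hz : 0 < Gamma1 x t) : leftLim (Gamma2 x) t = Gamma2 x t := by
  have hmono := gamma2_mono x hx
  rcases eq_or_lt_of_le ht with h0 | h0
  · have hne : (𝓝[<] (t:ℝ)) ≠ ⊥ := Filter.NeBot.ne inferInstance
    have hll : leftLim (Gamma2 x) t = 0 := by
      apply leftLim_eq_of_tendsto
      apply Filter.Tendsto.congr' _ (tendsto_const_nhds (α := ℝ) (x := (0:ℝ)))
      filter_upwards [Ioo_mem_nhdsLT_of_mem
        (show t ∈ Set.Ioc (t-1) t from ⟨by linarith, le_rfl⟩)] with u hu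
      exact (gamma2_neg x (by rw [← h0] at hu; exact hu.2)).symm
    rw [hll, ← h0, gamma2_zero x hx0]
  · by_contra hne2
    have hlt : leftLim (Gamma2 x) t < Gamma2 x t :=
      lt_of_le_of_ne (hmono.leftLim_le le_rfl) hne2
    set c := leftLim (Gamma2 x) t with hc
    have hc0 : (0:ℝ) ≤ c := le_trans (gamma2_nonneg x 0) (hmono.le_leftLim h0)
    have hyt : Gamma2 x t ≤ max c (max (-x t) 0) := by
      apply csSup_le ⟨_, Set.mem_image_of_mem _ (Set.left_mem_Icc.2 ht)⟩
      rintro v ⟨s, hs, rfl⟩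
      rcases lt_or_eq_of_le hs.2 with hst | hst
      · exact le_trans (le_trans (gamma2_le x hx (Set.right_mem_Icc.2 hs.1))
          (hmono.le_leftLim hst)) (le_max_left _ _)
      · rw [hst]; exact le_max_right _ _
    have h6 : max (-x t) 0 ≤ Gamma2 x t := gamma2_le x hx (Set.right_mem_Icc.2 ht)
    have h5 : Gamma2 x t ≤ max (-x t) 0 := by
      rcases max_cases c (max (-x t) 0) with ⟨hm, hcm⟩ | ⟨hm, -⟩
      · rw [hm] at hyt; exact absurd hyt (not_le.2 hlt)
      · rwa [hm] at hyt
    have h7 : Gamma2 x t = max (-x t) 0 := le_antisymm h5 h6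
    have h8 : 0 < Gamma2 x t := lt_of_le_of_lt hc0 hlt
    have h9 : Gamma2 x t = -x t := by
      rcases max_cases (-x t) (0:ℝ) with ⟨hm, -⟩ | ⟨hm, -⟩
      · rw [h7, hm]
      · rw [h7, hm] at h8; exact absurd h8 (lt_irrefl 0)
    have : Gamma1 x t = 0 := by rw [Gamma1, h9]; ring
    rw [this] at hz; exact absurd hz (lt_irrefl 0)

lemma leftLim_const_interval {g : ℝ → ℝ} {t δ c : ℝ} (hδ : 0 < δ)
    (hconst : ∀ u ∈ Set.Ico t (t+δ), g u = c) : leftLim g (t+δ) = c := by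
  have hne : (𝓝[<] (t+δ)) ≠ ⊥ := Filter.NeBot.ne inferInstance
  apply leftLim_eq_of_tendsto
  apply Filter.Tendsto.congr' _ (tendsto_const_nhds (α := ℝ) (x := c))
  filter_upwards [Ioo_mem_nhdsLT_of_mem
    (show t+δ ∈ Set.Ioc t (t+δ) from ⟨by linarith, le_rfl⟩)] with u hu
  exact (hconst u ⟨hu.1.le, hu.2⟩).symm


/-- The pair `(Γ₁(x), Γ₂(x))` solves the one-dimensional Skorokhod problem for a
càdlàg path `x` with `x(0) ≥ 0`: `Γ₁(x) = x + Γ₂(x)`, `Γ₁(x) ≥ 0` on `[0,∞)`,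
`Γ₂(x)(0) = 0`, `Γ₂(x)` is nondecreasing on `[0,∞)`, and the Lebesgue–Stieltjes
measure induced by `Γ₂(x)` assigns zero mass to `{t ≥ 0 : Γ₁(x)(t) > 0}`. -/
theorem skorokhod_map_solves_skorokhod_problem
    (x : ℝ → ℝ) (hx : Cadlag x) (hx0 : 0 ≤ x 0) :
    (∀ t : ℝ, 0 ≤ t → Gamma1 x t = x t + Gamma2 x t) ∧
    (∀ t : ℝ, 0 ≤ t → 0 ≤ Gamma1 x t) ∧
    Gamma2 x 0 = 0 ∧
    MonotoneOn (Gamma2 x) (Set.Ici 0) ∧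
    ∃ S : StieltjesFunction ℝ, (∀ t : ℝ, S t = Gamma2 x t) ∧
      S.measure {t : ℝ | 0 ≤ t ∧ 0 < Gamma1 x t} = 0 := by
  have hmono := gamma2_mono x hx
  refine ⟨fun t _ => rfl, fun t ht => gamma1_nonneg x hx ht, gamma2_zero x hx0,
    hmono.monotoneOn _, ?_⟩
  set S : StieltjesFunction ℝ := ⟨Gamma2 x, hmono, gamma2_rightCont x hx⟩ with hS
  have hcoe : (S : ℝ → ℝ) = Gamma2 x := rfl
  refine ⟨S, fun t => rfl, ?_⟩
  set A := {t : ℝ | 0 ≤ t ∧ 0 < Gamma1 x t} with hA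
  have hδ : ∀ t ∈ A, ∃ d, 0 < d ∧ ∀ u ∈ Set.Ico t (t+d), Gamma2 x u = Gamma2 x t :=
    fun t ht => by
      rcases gamma2_const_of_pos x hx ht.1 ht.2 with ⟨d, hd, h⟩; exact ⟨d, hd, h⟩
  choose! δ hδpos hδconst using hδ
  have hll : ∀ t ∈ A, leftLim (Gamma2 x) t = Gamma2 x t :=
    fun t ht => gamma2_leftLim x hx hx0 ht.1 ht.2
  have hIconull : ∀ t ∈ A, S.measure (Set.Ico t (t + δ t)) = 0 := by
    intro t ht
    rw [StieltjesFunction.measure_Ico, hcoe, leftLim_const_interval (hδpos t ht) (hδconst t ht),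
      hll t ht]
    simp
  -- open part
  obtain ⟨T, hTc, hTU⟩ := TopologicalSpace.isOpen_iUnion_countable
    (fun a : A => Set.Ioo (a : ℝ) ((a : ℝ) + δ a)) (fun a => isOpen_Ioo)
  set W := ⋃ a : A, Set.Ioo (a : ℝ) ((a : ℝ) + δ a) with hW
  have hWnull : S.measure W = 0 := by
    have h0 : S.measure (⋃ i ∈ T, Set.Ioo (i : ℝ) ((i : ℝ) + δ i)) = 0 := by
      refine (measure_biUnion_null_iff hTc).2 ?_
      intro a _
      exact measure_mono_null Set.Ioo_subset_Ico_self (hIconull a a.2)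
    rwa [hTU] at h0
  have hsub : A ⊆ W ∪ (A \ W) :=
    fun t ht => (em (t ∈ W)).elim Or.inl (fun h => Or.inr ⟨ht, h⟩)
  refine measure_mono_null hsub (measure_union_null hWnull ?_)
  -- countable part
  have hq : ∀ t ∈ A \ W, ∃ r : ℚ, (t:ℝ) < r ∧ (r:ℝ) < t + δ t := by
    intro t ht
    exact exists_rat_btwn (by have := hδpos t ht.1; linarith)
  choose! q hq1 hq2 using hq
  have hqmono : ∀ t1 ∈ A \ W, ∀ t2 ∈ A \ W, t1 < t2 → (q t1 : ℝ) < q t2 := by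
    intro t1 h1 t2 h2 hlt
    have hnot : t2 ∉ Set.Ioo t1 (t1 + δ t1) := by
      intro hmem
      exact h2.2 (Set.mem_iUnion.2 ⟨⟨t1, h1.1⟩, hmem⟩)
    have ht2 : t1 + δ t1 ≤ t2 := by
      by_contra hcon
      exact hnot ⟨hlt, not_le.1 hcon⟩
    calc (q t1 : ℝ) < t1 + δ t1 := hq2 t1 h1
      _ ≤ t2 := ht2
      _ < q t2 := hq1 t2 h2
  have hinj : Set.InjOn q (A \ W) := by
    intro t1 h1 t2 h2 he
    by_contra hne
    rcases lt_or_gt_of_ne hne with hlt | hlt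
    · have := hqmono t1 h1 t2 h2 hlt
      rw [he] at this; exact absurd this (lt_irrefl _)
    · have := hqmono t2 h2 t1 h1 hlt
      rw [he] at this; exact absurd this (lt_irrefl _)
  have hcount : (A \ W).Countable := by
    have : Set.InjOn (fun t => Encodable.encode (q t)) (A \ W) :=
      fun t1 h1 t2 h2 he => hinj h1 h2 (Encodable.encode_injective he)
    exact Set.countable_iff_exists_injOn.2 ⟨_, this⟩
  rw [← Set.biUnion_of_singleton (A \ W)]
  refine (measure_biUnion_null_iff hcount).2 ?_
  intro t ht
  rw [StieltjesFunction.measure_singleton, hcoe, hll t ht.1]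
  simp
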